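/- For integer N ≥ 500 and 1/N ≤ x < 1, the function f(x) = N − 2(1 − (1−x)^N)/x + N(1−x)^{N−1} satisfies f(x) ≥ N/10. -/

import Mathlib

open Real Set

lemma exp_aux {u : ℝ} (hu : (498:ℝ)/500 ≤ u) : (1 + u) * Real.exp (-u) ≤ 9/10 := by
  have h1 : 1 + u/2 ≤ Real.exp (u/2) := by
    have := Real.add_one_le_exp (u/2); linarith
  have h2 : Real.exp (u/2) ^ 2 = Real.exp u := by
    rw [sq, ← Real.exp_add]; ring_nf
  have h4 : (1+u/2)^2 ≤ Real.exp u := by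
    rw [← h2]; exact pow_le_pow_left₀ (by linarith) h1 2
  have h3 : (1+u) ≤ 9/10 * Real.exp u := by
    nlinarith [sq_nonneg (u - 498/500)]
  calc (1+u) * Real.exp (-u) ≤ (9/10 * Real.exp u) * Real.exp (-u) := by
        exact mul_le_mul_of_nonneg_right h3 (le_of_lt (Real.exp_pos _))
    _ = 9/10 := by rw [mul_assoc, ← Real.exp_add]; simp

lemma mono_aux (M : ℕ) (hM : 498 ≤ M) :
    MonotoneOn (fun y : ℝ => 9/10*(M+2)*y + 2*(1-y)^(M+2) + (M+2)*y*(1-y)^(M+1))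
      (Icc (1/((M:ℝ)+2)) (20/(9*((M:ℝ)+2)))) := by
  have hMpos : (0:ℝ) < (M:ℝ) + 2 := by positivity
  have hderiv : ∀ y : ℝ, HasDerivAt (fun y : ℝ => 9/10*(M+2)*y + 2*(1-y)^(M+2) + (M+2)*y*(1-y)^(M+1))
      (9/10*(M+2) - ((M:ℝ)+2)*(1-y)^(M+1) - ((M:ℝ)+2)*((M:ℝ)+1)*y*(1-y)^M) y := by
    intro y
    have hB : HasDerivAt (fun y : ℝ => 1 - y) (-1) y := (hasDerivAt_id y).const_sub 1
    have hC : HasDerivAt (fun y : ℝ => (1-y)^(M+2)) (((M:ℝ)+2)*(1-y)^(M+1)*(-1)) y := by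
      have := hB.fun_pow (M+2)
      simpa using this
    have hD : HasDerivAt (fun y : ℝ => (1-y)^(M+1)) (((M:ℝ)+1)*(1-y)^M*(-1)) y := by
      have := hB.fun_pow (M+1)
      simpa using this
    have hA : HasDerivAt (fun y : ℝ => 9/10*((M:ℝ)+2)*y) (9/10*((M:ℝ)+2)) y := by
      simpa using (hasDerivAt_id y).const_mul (9/10*((M:ℝ)+2))
    have hE : HasDerivAt (fun y : ℝ => ((M:ℝ)+2)*y) ((M:ℝ)+2) y := by
      simpa using (hasDerivAt_id y).const_mul ((M:ℝ)+2)
    have hF := hE.fun_mul hD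
    have := (hA.fun_add (hC.const_mul 2)).fun_add hF
    refine this.congr_deriv ?_
    ring
  apply monotoneOn_of_deriv_nonneg (convex_Icc _ _)
  · apply Continuous.continuousOn
    continuity
  · intro y hy
    exact (hderiv y).differentiableAt.differentiableWithinAt
  · intro y hy
    rw [interior_Icc, mem_Ioo] at hy
    rw [(hderiv y).deriv]
    have hy1 : 1/((M:ℝ)+2) < y := hy.1
    have hy2 : y < 20/(9*((M:ℝ)+2)) := hy.2
    have hy0 : 0 < y := lt_trans (by positivity) hy1
    have hyl : y < 1 := by
      have : 20/(9*((M:ℝ)+2)) ≤ 1 := by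
        rw [div_le_one (by positivity)]; have hM' : (498:ℝ) ≤ (M:ℝ) := by exact_mod_cast hM
        nlinarith
      linarith
    -- key : (1-y)^M * (1 + M*y) ≤ 9/10
    have hM' : (498:ℝ) ≤ (M:ℝ) := by exact_mod_cast hM
    have hy1' : 1 ≤ y*((M:ℝ)+2) := by
      have h := hy1.le
      rwa [div_le_iff₀ hMpos] at h
    have hu : (498:ℝ)/500 ≤ (M:ℝ)*y := by
      have h1 : (M:ℝ)/((M:ℝ)+2) ≤ (M:ℝ)*y := by
        rw [div_le_iff₀ hMpos]
        nlinarith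
      have h2 : (498:ℝ)/500 ≤ (M:ℝ)/((M:ℝ)+2) := by
        rw [div_le_div_iff₀ (by norm_num) hMpos]
        linarith
      linarith
    have hpow : (1-y)^M ≤ Real.exp (-((M:ℝ)*y)) := by
      have h1 : 1 - y ≤ Real.exp (-y) := by
        have := Real.add_one_le_exp (-y); linarith
      calc (1-y)^M ≤ Real.exp (-y) ^ M := pow_le_pow_left₀ (by linarith) h1 M
        _ = Real.exp (-((M:ℝ)*y)) := by rw [← Real.exp_nat_mul]; ring_nf
    have key : (1-y)^M * (1 + (M:ℝ)*y) ≤ 9/10 := by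
      have h5 : (1-y)^M * (1 + (M:ℝ)*y) ≤ Real.exp (-((M:ℝ)*y)) * (1 + (M:ℝ)*y) := by
        apply mul_le_mul_of_nonneg_right hpow (by positivity)
      calc (1-y)^M * (1 + (M:ℝ)*y) ≤ Real.exp (-((M:ℝ)*y)) * (1 + (M:ℝ)*y) := h5
        _ = (1 + (M:ℝ)*y) * Real.exp (-((M:ℝ)*y)) := by ring
        _ ≤ 9/10 := exp_aux hu
    have hfac : (1-y)^(M+1) + ((M:ℝ)+1)*y*(1-y)^M = (1-y)^M * (1 + (M:ℝ)*y) := by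
      rw [pow_succ]; ring
    nlinarith [key, hfac, hMpos, pow_nonneg (by linarith : (0:ℝ) ≤ 1 - y) M]

lemma endpoint_aux (M : ℕ) (hM : 498 ≤ M) :
    (2:ℝ) ≤ 9/10*((M:ℝ)+2)*(1/((M:ℝ)+2)) + 2*(1-1/((M:ℝ)+2))^(M+2)
      + ((M:ℝ)+2)*(1/((M:ℝ)+2))*(1-1/((M:ℝ)+2))^(M+1) := by
  have hM' : (498:ℝ) ≤ (M:ℝ) := by exact_mod_cast hM
  have hMpos : (0:ℝ) < (M:ℝ) + 2 := by positivity
  set c : ℝ := 1 - 1/((M:ℝ)+2) with hc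
  have hc0 : 0 < c := by
    rw [hc, sub_pos, div_lt_one hMpos]; linarith
  have hc1 : c < 1 := by
    rw [hc]; have : 0 < 1/((M:ℝ)+2) := by positivity
    linarith
  have hinv : c * (1 + 1/((M:ℝ)+1)) = 1 := by
    rw [hc]; field_simp; ring
  have hle : (1 + 1/((M:ℝ)+1))^(M+1) ≤ Real.exp 1 := by
    have h := Real.add_one_le_exp (1/((M:ℝ)+1))
    calc (1+1/((M:ℝ)+1))^(M+1) ≤ Real.exp (1/((M:ℝ)+1)) ^ (M+1) :=
          pow_le_pow_left₀ (by positivity) (by linarith) _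
      _ = Real.exp (((M:ℝ)+1) * (1/((M:ℝ)+1))) := by
          rw [← Real.exp_nat_mul]; push_cast; ring_nf
      _ = Real.exp 1 := by rw [mul_one_div, div_self (by positivity)]
  have hprod : c^(M+1) * (1 + 1/((M:ℝ)+1))^(M+1) = 1 := by
    rw [← mul_pow, hinv, one_pow]
  have h7 : 1 ≤ Real.exp 1 * c^(M+1) := by
    calc (1:ℝ) = c^(M+1) * (1 + 1/((M:ℝ)+1))^(M+1) := hprod.symm
      _ ≤ c^(M+1) * Real.exp 1 := mul_le_mul_of_nonneg_left hle (pow_nonneg hc0.le _)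
      _ = Real.exp 1 * c^(M+1) := mul_comm _ _
  have hexp : Real.exp 1 < 2.7182818286 := Real.exp_one_lt_d9
  have hcl : (499:ℝ)/500 ≤ c := by
    rw [hc]
    have : 1/((M:ℝ)+2) ≤ 1/500 := by
      rw [div_le_div_iff₀ hMpos (by norm_num)]; linarith
    linarith
  have hkey : (11:ℝ)/10 ≤ c^(M+1)*(2*c+1) := by
    have hp0 : 0 ≤ c^(M+1) := pow_nonneg hc0.le _
    nlinarith [mul_nonneg hp0 (sub_nonneg.mpr hexp.le), Real.exp_pos 1, h7, hcl]
  have hsimp : 9/10*((M:ℝ)+2)*(1/((M:ℝ)+2)) + 2*c^(M+2) + ((M:ℝ)+2)*(1/((M:ℝ)+2))*c^(M+1)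
      = 9/10 + c^(M+1)*(2*c+1) := by
    rw [pow_succ]; field_simp; ring
  rw [hsimp]; linarith

set_option maxRecDepth 10000 in
/-- for `N ≥ 500` and `1/N ≤ x < 1`,
`f(x) = N - 2(1-(1-x)^N)/x + N(1-x)^{N-1} ≥ N/10`. -/
theorem variance_f_lower_large_x (x : ℝ) (N : ℕ) (hN : 500 ≤ N) (hx1 : 1 / (N : ℝ) ≤ x)
    (hx2 : x < 1) :
    (N : ℝ) / 10
      ≤ (N : ℝ) - 2 * (1 - (1 - x) ^ N) / x + (N : ℝ) * (1 - x) ^ (N - 1) := by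
  obtain ⟨M, rfl⟩ : ∃ M, N = M + 2 := ⟨N - 2, by omega⟩
  have hM : 498 ≤ M := by omega
  have hM' : (498:ℝ) ≤ (M:ℝ) := by exact_mod_cast hM
  have hMpos : (0:ℝ) < (M:ℝ) + 2 := by positivity
  have hcastN : ((M + 2 : ℕ) : ℝ) = (M:ℝ) + 2 := by push_cast; ring
  have hsub : M + 2 - 1 = M + 1 := by omega
  rw [hcastN, hsub]
  have hx0 : 0 < x := lt_of_lt_of_le (by positivity) hx1
  rw [hcastN] at hx1
  have h1mx : 0 ≤ 1 - x := by linarith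
  by_cases hcase : x < 20/(9*((M:ℝ)+2))
  · -- small x : use monotonicity
    have hmem1 : (1/((M:ℝ)+2)) ∈ Set.Icc (1/((M:ℝ)+2)) (20/(9*((M:ℝ)+2))) := by
      constructor
      · exact le_refl _
      · rw [div_le_div_iff₀ hMpos (by positivity)]; nlinarith
    have hmem2 : x ∈ Set.Icc (1/((M:ℝ)+2)) (20/(9*((M:ℝ)+2))) := ⟨hx1, hcase.le⟩
    have hmono := mono_aux M hM hmem1 hmem2 hx1
    simp only [] at hmono
    have hend := endpoint_aux M hM
    have hgx : (2:ℝ) ≤ 9/10*((M:ℝ)+2)*x + 2*(1-x)^(M+2) + ((M:ℝ)+2)*x*(1-x)^(M+1) :=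
      le_trans hend hmono
    have hkey : ((M:ℝ)+2) - 2*(1-(1-x)^(M+2))/x + ((M:ℝ)+2)*(1-x)^(M+1) - ((M:ℝ)+2)/10
        = (9/10*((M:ℝ)+2)*x + 2*(1-x)^(M+2) + ((M:ℝ)+2)*x*(1-x)^(M+1) - 2)/x := by
      field_simp; ring
    have h3 : 0 ≤ (9/10*((M:ℝ)+2)*x + 2*(1-x)^(M+2) + ((M:ℝ)+2)*x*(1-x)^(M+1) - 2)/x :=
      div_nonneg (by linarith) hx0.le
    linarith [hkey ▸ h3]
  · -- large x
    push_neg at hcase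
    have h2x : 2/x ≤ 9/10*((M:ℝ)+2) := by
      rw [div_le_iff₀ hx0]
      have h20 : 20/(9*((M:ℝ)+2)) ≤ x := hcase
      rw [div_le_iff₀ (by positivity)] at h20
      nlinarith
    have h1x : 2*(1-(1-x)^(M+2)) ≤ 2 := by
      nlinarith [pow_nonneg h1mx (M+2)]
    have hterm : 2*(1-(1-x)^(M+2))/x ≤ 2/x := by gcongr
    have hnn : 0 ≤ ((M:ℝ)+2)*(1-x)^(M+1) :=
      mul_nonneg (by positivity) (pow_nonneg h1mx _)
    linarith
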